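/- Let PSL(2,ℂ) denote the quotient of SL(2,ℂ) by its center {I, −I}. If x ∈ PSL(2,ℂ) is an element of infinite order, then the centralizer of x in PSL(2,ℂ) is abelian. -/

import Mathlib

open Matrix

lemma sl2_entry_eqs (X A : Matrix (Fin 2) (Fin 2) ℂ) (h : A * X = X * A) :
    A 0 0 * X 0 0 + A 0 1 * X 1 0 = X 0 0 * A 0 0 + X 0 1 * A 1 0 ∧
    A 0 0 * X 0 1 + A 0 1 * X 1 1 = X 0 0 * A 0 1 + X 0 1 * A 1 1 ∧
    A 1 0 * X 0 0 + A 1 1 * X 1 0 = X 1 0 * A 0 0 + X 1 1 * A 1 0 ∧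
    A 1 0 * X 0 1 + A 1 1 * X 1 1 = X 1 0 * A 0 1 + X 1 1 * A 1 1 := by
  refine ⟨?_, ?_, ?_, ?_⟩
  · simpa [Matrix.mul_apply, Fin.sum_univ_two] using congrFun (congrFun h 0) 0
  · simpa [Matrix.mul_apply, Fin.sum_univ_two] using congrFun (congrFun h 0) 1
  · simpa [Matrix.mul_apply, Fin.sum_univ_two] using congrFun (congrFun h 1) 0
  · simpa [Matrix.mul_apply, Fin.sum_univ_two] using congrFun (congrFun h 1) 1

lemma sl2_span (X A : Matrix (Fin 2) (Fin 2) ℂ)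
    (hX : ¬ ∃ c : ℂ, X = c • (1 : Matrix (Fin 2) (Fin 2) ℂ))
    (h : A * X = X * A) : ∃ α β : ℂ, A = α • 1 + β • X := by
  obtain ⟨e1, e2, e3, e4⟩ := sl2_entry_eqs X A h
  by_cases hq : X 0 1 ≠ 0
  · refine ⟨A 0 0 - (A 0 1 / X 0 1) * X 0 0, A 0 1 / X 0 1, ?_⟩
    ext i j
    fin_cases i <;> fin_cases j
    · simp [Matrix.one_apply]
    · simp [Matrix.one_apply]; field_simp
    · simp [Matrix.one_apply]; field_simp; linear_combination -e1
    · simp [Matrix.one_apply]; field_simp; linear_combination -e2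
  · push_neg at hq
    by_cases hr : X 1 0 ≠ 0
    · refine ⟨A 0 0 - (A 1 0 / X 1 0) * X 0 0, A 1 0 / X 1 0, ?_⟩
      have hb : A 0 1 * X 1 0 = 0 := by linear_combination e1 + A 1 0 * hq
      have hb' : A 0 1 = 0 := by
        rcases mul_eq_zero.mp hb with h' | h'
        · exact h'
        · exact absurd h' hr
      ext i j
      fin_cases i <;> fin_cases j
      · simp [Matrix.one_apply]
      · simp [Matrix.one_apply, hq, hb']
      · simp [Matrix.one_apply]; field_simp
      · simp [Matrix.one_apply]; field_simp; linear_combination e3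
    · push_neg at hr
      have hps : X 0 0 ≠ X 1 1 := by
        intro hcon
        exact hX ⟨X 0 0, by ext i j; fin_cases i <;> fin_cases j <;>
          simp [Matrix.one_apply, hq, hr, hcon]⟩
      have hps' : X 0 0 - X 1 1 ≠ 0 := sub_ne_zero.mpr hps
      have hb : A 0 1 * (X 1 1 - X 0 0) = 0 := by
        linear_combination e2 + (A 1 1 - A 0 0) * hq
      have hb' : A 0 1 = 0 := by
        rcases mul_eq_zero.mp hb with h' | h'
        · exact h'
        · exact absurd (by linear_combination -h') hps'
      have hc : A 1 0 * (X 0 0 - X 1 1) = 0 := by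
        linear_combination e3 + (A 0 0 - A 1 1) * hr
      have hc' : A 1 0 = 0 := by
        rcases mul_eq_zero.mp hc with h' | h'
        · exact h'
        · exact absurd h' hps'
      refine ⟨A 0 0 - ((A 0 0 - A 1 1) / (X 0 0 - X 1 1)) * X 0 0,
        (A 0 0 - A 1 1) / (X 0 0 - X 1 1), ?_⟩
      ext i j
      fin_cases i <;> fin_cases j
      · simp [Matrix.one_apply]
      · simp [Matrix.one_apply, hq, hb']
      · simp [Matrix.one_apply, hr, hc']
      · simp [Matrix.one_apply]; field_simp; ring

lemma sl2_sq (X : Matrix (Fin 2) (Fin 2) ℂ) (hdet : X.det = 1) :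
    X * X = X.trace • X - 1 := by
  rw [Matrix.det_fin_two] at hdet
  ext i j
  fin_cases i <;> fin_cases j <;>
    simp [Matrix.mul_apply, Fin.sum_univ_two, Matrix.trace_fin_two, Matrix.one_apply] <;>
    first | ring1 | linear_combination -hdet

lemma scalar_fin2 (r : ℂ) :
    Matrix.scalar (Fin 2) r = r • (1 : Matrix (Fin 2) (Fin 2) ℂ) := by
  rw [Matrix.scalar_apply]
  ext i j
  by_cases h : i = j <;> simp [Matrix.diagonal, Matrix.one_apply, h]

abbrev SL2C := Matrix.SpecialLinearGroup (Fin 2) ℂ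

open Matrix.SpecialLinearGroup in
lemma sl2_comm_of_mem_centralizer (X A : SL2C)
    (hx : ¬ IsOfFinOrder (QuotientGroup.mk (s := Subgroup.center SL2C) X))
    (ha : (QuotientGroup.mk A : SL2C ⧸ Subgroup.center SL2C) ∈
      Subgroup.centralizer {QuotientGroup.mk X}) :
    (A : Matrix (Fin 2) (Fin 2) ℂ) * X = X * A := by
  have hcomm : (QuotientGroup.mk (X * A) : SL2C ⧸ Subgroup.center SL2C)
      = QuotientGroup.mk (A * X) := by
    have := Subgroup.mem_centralizer_iff.mp ha (QuotientGroup.mk X) rfl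
    simpa [QuotientGroup.mk_mul] using this
  have hz : (X * A)⁻¹ * (A * X) ∈ Subgroup.center SL2C := (QuotientGroup.eq).mp hcomm
  obtain ⟨r, hr2, hrz⟩ := mem_center_iff.mp hz
  simp [Fintype.card_fin] at hr2
  have hgrp : (X * A) * ((X * A)⁻¹ * (A * X)) = A * X := by group
  have hmat : r • ((X : Matrix (Fin 2) (Fin 2) ℂ) * A) = (A : Matrix (Fin 2) (Fin 2) ℂ) * X := by
    have h2 := congrArg (fun M : SL2C => (M : Matrix (Fin 2) (Fin 2) ℂ)) hgrp
    rw [coe_mul, ← hrz, scalar_fin2, coe_mul, coe_mul] at h2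
    simpa [Matrix.mul_smul] using h2
  rcases hr2 with h' | h'
  · rw [h', one_smul] at hmat
    exact hmat.symm
  · exfalso
    rw [h'] at hmat
    set M : Matrix (Fin 2) (Fin 2) ℂ := (X : Matrix (Fin 2) (Fin 2) ℂ) with hM
    set N : Matrix (Fin 2) (Fin 2) ℂ := (A : Matrix (Fin 2) (Fin 2) ℂ) with hN
    have hmat' : N * M = -(M * N) := by
      rw [← hmat]; simp
    have hsq : M * M = M.trace • M - 1 := sl2_sq M X.prop
    have h1 : N * (M * M) = (M * M) * N := by
      calc N * (M * M) = (N * M) * M := by rw [mul_assoc]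
        _ = -((M * N) * M) := by rw [hmat']; simp
        _ = -(M * (N * M)) := by rw [mul_assoc]
        _ = -(M * (-(M * N))) := by rw [hmat']
        _ = (M * M) * N := by simp [mul_assoc]
    rw [hsq] at h1
    have h3 : M.trace • (N * M) - N = M.trace • (M * N) - N := by
      simp only [Matrix.mul_sub, Matrix.sub_mul, Matrix.mul_smul, Matrix.smul_mul,
        mul_one, one_mul] at h1
      simpa [Matrix.mul_smul, Matrix.smul_mul] using h1
    have expand : M.trace • (N * M) = M.trace • (M * N) := by
      simpa [sub_add_cancel] using congrArg (· + N) h3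
    rw [hmat', smul_neg] at expand
    have ea : M.trace • (M * N) = -(M.trace • (M * N)) := expand.symm
    have h2s : (2 : ℂ) • (M.trace • (M * N)) = 0 := by
      rw [two_smul]
      nth_rewrite 2 [ea]
      exact add_neg_cancel _
    have h2 : M.trace • (M * N) = 0 := by
      rcases smul_eq_zero.mp h2s with h | h
      · norm_num at h
      · exact h
    have hMN : M * N ≠ 0 := by
      intro h0
      have hd : (M * N).det = 1 := by rw [Matrix.det_mul, X.prop, A.prop]; ring
      rw [h0] at hd
      simp at hd
    have ht : M.trace = 0 := by
      rcases smul_eq_zero.mp h2 with h | h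
      · exact h
      · exact absurd h hMN
    have hXX : M * M = -1 := by rw [hsq, ht]; simp
    apply hx
    refine isOfFinOrder_iff_pow_eq_one.mpr ⟨2, by norm_num, ?_⟩
    have hc : (X * X : SL2C) ∈ Subgroup.center SL2C := by
      refine mem_center_iff.mpr ⟨-1, by norm_num, ?_⟩
      rw [scalar_fin2, coe_mul, ← hM, hXX]; simp
    have hpow : (QuotientGroup.mk (s := Subgroup.center SL2C) X) ^ 2
        = QuotientGroup.mk (X * X) := by
      rw [pow_two, QuotientGroup.mk_mul]
    rw [hpow, QuotientGroup.eq_one_iff]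
    exact hc


/-- In `PSL(2,ℂ)`, the quotient of `SL(2,ℂ)` by its center `{I, -I}`, the centralizer of
any element of infinite order is abelian. -/
theorem psl2C_centralizer_of_infinite_order_abelian
    (x : Matrix.SpecialLinearGroup (Fin 2) ℂ ⧸
      Subgroup.center (Matrix.SpecialLinearGroup (Fin 2) ℂ))
    (hx : ¬ IsOfFinOrder x) :
    ∀ a ∈ Subgroup.centralizer {x}, ∀ b ∈ Subgroup.centralizer {x}, a * b = b * a := by
  obtain ⟨X, rfl⟩ := QuotientGroup.mk_surjective x
  intro a ha b hb
  obtain ⟨A, rfl⟩ := QuotientGroup.mk_surjective a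
  obtain ⟨B, rfl⟩ := QuotientGroup.mk_surjective b
  have hA := sl2_comm_of_mem_centralizer X A hx ha
  have hB := sl2_comm_of_mem_centralizer X B hx hb
  have hXns : ¬ ∃ c : ℂ, (X : Matrix (Fin 2) (Fin 2) ℂ) = c • 1 := by
    rintro ⟨c, hc⟩
    apply hx
    have hcen : X ∈ Subgroup.center SL2C := by
      refine Matrix.SpecialLinearGroup.mem_center_iff.mpr ⟨c, ?_, ?_⟩
      · have hd := X.prop
        rw [hc] at hd
        simpa [Matrix.det_smul, Fintype.card_fin] using hd
      · rw [scalar_fin2, hc]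
    have h1 : (QuotientGroup.mk X : SL2C ⧸ Subgroup.center SL2C) = 1 :=
      (QuotientGroup.eq_one_iff X).mpr hcen
    rw [h1]
    exact IsOfFinOrder.one
  obtain ⟨α, β, hAe⟩ := sl2_span X A hXns hA
  obtain ⟨γ, δ, hBe⟩ := sl2_span X B hXns hB
  have hABm : (A : Matrix (Fin 2) (Fin 2) ℂ) * B = (B : Matrix (Fin 2) (Fin 2) ℂ) * A := by
    rw [hAe, hBe]
    simp only [add_mul, mul_add, smul_mul_assoc, mul_smul_comm, one_mul, mul_one, smul_smul]
    module
  have hAB : A * B = B * A := Subtype.ext (by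
    simpa [Matrix.SpecialLinearGroup.coe_mul] using hABm)
  rw [← QuotientGroup.mk_mul, hAB, QuotientGroup.mk_mul]
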